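/- arXiv:1408.3222 — 3 statements merged into one kernel-verified Lean document; each statement's English description precedes it below -/
import Mathlib

section
/- Let Δ ⊂ ℝ^n be a convex body (compact convex set with nonempty interior) with Lebesgue volume vol(Δ) > 0, and let f : Δ → ℝ be a nonnegative concave function. Then sup_{x∈Δ} f(x) ≤ ((n+1)/vol(Δ)) · ∫_Δ f(z) dz. -/
open MeasureTheory Set

theorem sup_le_average_of_concave (n : ℕ) (Δ : Set (Fin n → ℝ))
    (hcomp : IsCompact Δ) (hconv : Convex ℝ Δ) (hpos : 0 < volume Δ)
    (f : (Fin n → ℝ) → ℝ) (hf : ContinuousOn f Δ)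
    (hnn : ∀ x ∈ Δ, 0 ≤ f x) (hconc : ConcaveOn ℝ Δ f) :
    ∀ x ∈ Δ, f x ≤ ((n + 1 : ℝ) / (volume Δ).toReal) * ∫ z in Δ, f z := by
  intro x₀ hx₀
  have hΔm : MeasurableSet Δ := hcomp.measurableSet
  set V : ℝ := (volume Δ).toReal with hV
  have hVpos : 0 < V := ENNReal.toReal_pos hpos.ne' hcomp.measure_lt_top.ne
  have hint : IntegrableOn f Δ volume := hf.integrableOn_compact hcomp
  set F : (Fin n → ℝ) → ℝ := Δ.indicator f with hFdef
  have hFint : Integrable F := (integrable_indicator_iff hΔm).2 hint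
  have hFnn : ∀ y, 0 ≤ F y := fun y => Set.indicator_nonneg (fun z hz => hnn z hz) y
  set I : ℝ := ∫ z in Δ, f z with hI
  have hIF : ∫ y, F y = I := integral_indicator hΔm
  have hInn : 0 ≤ I := setIntegral_nonneg hΔm hnn
  set M : ℝ := f x₀ with hM
  have hMnn : 0 ≤ M := hnn x₀ hx₀
  have key : ∀ t ∈ Ioo (0:ℝ) 1, t ^ n * (M * V) ≤ (n + 1 : ℝ) * I := by
    intro t ht
    obtain ⟨ht0, ht1⟩ := ht
    set c : Fin n → ℝ := x₀ - t • x₀ with hc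
    have haff : ∀ z : Fin n → ℝ, c + t • z = (1 - t) • x₀ + t • z := by
      intro z; rw [hc, sub_smul, one_smul]
    have hmem : ∀ z ∈ Δ, c + t • z ∈ Δ := by
      intro z hz
      rw [haff]
      exact hconv hx₀ hz (by linarith) ht0.le (by ring)
    -- change of variables
    have hcov : ∫ z, F (c + t • z) = (t ^ n)⁻¹ * (∫ y, F y) := by
      have h1 : ∫ z, F (c + t • z) = ∫ z, (fun y => F (c + y)) (t • z) := rfl
      rw [h1, Measure.integral_comp_smul_of_nonneg volume (fun y => F (c + y)) t (hR := ht0.le)]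
      rw [integral_add_left_eq_self (μ := volume) F c]
      simp [Module.finrank_fin_fun]
    -- integrability of the composed function
    have hcomp_int : Integrable (fun z => F (c + t • z)) := by
      have h1 : Integrable (fun y => F (c + y)) := hFint.comp_add_left c
      exact h1.comp_smul ht0.ne'
    -- lower bound on the composed integral
    have hlow : (1 - t) * M * V + t * I ≤ ∫ z, F (c + t • z) := by
      have hle : ∫ z in Δ, F (c + t • z) ≤ ∫ z, F (c + t • z) := by
        apply setIntegral_le_integral hcomp_int
        exact Filter.Eventually.of_forall fun y => hFnn _
      refine le_trans ?_ hle
      have h2 : ∫ z in Δ, ((1 - t) * M + t * f z) ≤ ∫ z in Δ, F (c + t • z) := by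
        apply setIntegral_mono_on
        · exact (integrableOn_const hcomp.measure_lt_top.ne).add (hint.const_mul t)
        · exact hcomp_int.integrableOn
        · exact hΔm
        · intro z hz
          have hmemz := hmem z hz
          rw [hFdef, Set.indicator_of_mem hmemz]
          have := hconc.2 hx₀ hz (by linarith : (0:ℝ) ≤ 1 - t) ht0.le (by ring)
          rw [haff z]
          simpa [smul_eq_mul] using this
      refine le_trans (le_of_eq ?_) h2
      rw [integral_add (integrableOn_const (C := (1 - t) * M) hcomp.measure_lt_top.ne : Integrable _ (volume.restrict Δ)) (hint.const_mul t)]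
      rw [setIntegral_const, integral_const_mul]
      simp only [setIntegral_const, smul_eq_mul, measureReal_def, ← hV, ← hI]
      ring
    -- combine: t^n * ((1-t) M V + t I) ≤ I
    have hcomb : t ^ n * ((1 - t) * M * V + t * I) ≤ I := by
      have htn : 0 < t ^ n := pow_pos ht0 n
      have := hlow.trans_eq hcov
      rw [hIF] at this
      calc t ^ n * ((1 - t) * M * V + t * I) ≤ t ^ n * ((t ^ n)⁻¹ * I) := by
            apply mul_le_mul_of_nonneg_left this htn.le
        _ = I := by field_simp
    -- rearrange using geometric sum
    have hgeom : (1 - t ^ (n + 1)) = (∑ i ∈ Finset.range (n + 1), t ^ i) * (1 - t) := by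
      have := geom_sum_mul t (n + 1)
      nlinarith [this]
    have hS : (∑ i ∈ Finset.range (n + 1), t ^ i) ≤ (n + 1 : ℝ) := by
      calc (∑ i ∈ Finset.range (n + 1), t ^ i) ≤ ∑ _i ∈ Finset.range (n + 1), (1:ℝ) :=
            Finset.sum_le_sum fun i _ => pow_le_one₀ ht0.le ht1.le
        _ = (n + 1 : ℝ) := by simp
    have h3 : t ^ n * (1 - t) * (M * V) ≤ (1 - t ^ (n + 1)) * I := by
      have : t ^ n * ((1 - t) * M * V) + t ^ n * (t * I) ≤ I := by nlinarith [hcomb]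
      have hpow : t ^ n * t = t ^ (n + 1) := by ring
      nlinarith [this]
    rw [hgeom] at h3
    have h1t : 0 < 1 - t := by linarith
    have h4 : t ^ n * (M * V) ≤ (∑ i ∈ Finset.range (n + 1), t ^ i) * I := by
      have := le_of_mul_le_mul_right (by linarith [h3] : t ^ n * (M * V) * (1 - t) ≤ (∑ i ∈ Finset.range (n + 1), t ^ i) * I * (1 - t)) h1t
      exact this
    calc t ^ n * (M * V) ≤ (∑ i ∈ Finset.range (n + 1), t ^ i) * I := h4
      _ ≤ (n + 1 : ℝ) * I := mul_le_mul_of_nonneg_right hS hInn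
  -- take the limit t → 1⁻
  have hlim : M * V ≤ (n + 1 : ℝ) * I := by
    have hten : Filter.Tendsto (fun t : ℝ => t ^ n * (M * V)) (nhdsWithin 1 (Iio 1))
        (nhds ((1:ℝ) ^ n * (M * V))) := by
      exact ((continuous_pow n).mul continuous_const).continuousWithinAt
    have : (1:ℝ) ^ n * (M * V) ≤ (n + 1 : ℝ) * I := by
      refine le_of_tendsto hten ?_
      filter_upwards [Ioo_mem_nhdsLT_of_mem (by constructor <;> norm_num : (1:ℝ) ∈ Ioc (0:ℝ) 1)]
        with t ht
      exact key t ht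
    simpa using this
  rw [div_mul_eq_mul_div, le_div_iff₀ hVpos]
  calc f x₀ * V = M * V := rfl
    _ ≤ (n + 1 : ℝ) * I := hlim
end

section
/- Let Δ ⊂ ℝ^n be a convex body and f : Δ → ℝ a concave continuous function. Then for all x ∈ Δ, min_{y∈Δ} f(y) ≤ f(x) ≤ ((n+1)/vol(Δ)) ∫_Δ (f(z) − min_{y∈Δ} f(y)) dz + min_{y∈Δ} f(y). -/
open MeasureTheory Set Filter Topology

theorem concave_between_min_and_average (n : ℕ) (Δ : Set (Fin n → ℝ))
    (hne : Δ.Nonempty) (hcomp : IsCompact Δ) (hconv : Convex ℝ Δ)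
    (hpos : 0 < volume Δ)
    (f : (Fin n → ℝ) → ℝ) (hf : ContinuousOn f Δ) (hconc : ConcaveOn ℝ Δ f) :
    ∀ x ∈ Δ, sInf (f '' Δ) ≤ f x ∧
      f x ≤ ((n + 1 : ℝ) / (volume Δ).toReal) *
          (∫ z in Δ, (f z - sInf (f '' Δ))) + sInf (f '' Δ) := by
  intro x hx
  set m := sInf (f '' Δ) with hm
  have hbdd : BddBelow (f '' Δ) := (hcomp.image_of_continuousOn hf).bddBelow
  have hmin : ∀ z ∈ Δ, m ≤ f z := fun z hz => csInf_le hbdd ⟨z, hz, rfl⟩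
  refine ⟨hmin x hx, ?_⟩
  set g : (Fin n → ℝ) → ℝ := fun z => f z - m with hg
  have hgc : ContinuousOn g Δ := hf.sub continuousOn_const
  have hg0 : ∀ z ∈ Δ, 0 ≤ g z := fun z hz => sub_nonneg.2 (hmin z hz)
  have hmeas : MeasurableSet Δ := hcomp.measurableSet
  have hint : IntegrableOn g Δ := hgc.integrableOn_compact hcomp
  set I := ∫ z in Δ, g z with hI
  set V := (volume Δ).toReal with hV
  have hVpos : 0 < V := ENNReal.toReal_pos hpos.ne' hcomp.measure_lt_top.ne
  have key : ∀ t ∈ Ioo (0:ℝ) 1,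
      t ^ n * (g x * V) ≤ (∑ i ∈ Finset.range (n + 1), t ^ i) * I := by
    intro t ht
    obtain ⟨ht0, ht1⟩ := ht
    set c : Fin n → ℝ := x - t • x with hc
    set h : (Fin n → ℝ) → (Fin n → ℝ) := fun z => t • z + c with hh
    have hhz : ∀ z, h z = (1 - t) • x + t • z := by
      intro z; simp only [hh, hc]; module
    have hmaps : MapsTo h Δ Δ := by
      intro z hz
      rw [hhz]
      exact hconv hx hz (by linarith) ht0.le (by ring)
    have hcont : Continuous h := by continuity
    have hghint : IntegrableOn (fun z => g (h z)) Δ :=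
      (hgc.comp hcont.continuousOn hmaps).integrableOn_compact hcomp
    -- step 1: concavity lower bound
    have step1 : (1 - t) * g x * V + t * I ≤ ∫ z in Δ, g (h z) := by
      have hle : ∀ z ∈ Δ, (1 - t) * g x + t * g z ≤ g (h z) := by
        intro z hz
        have := hconc.2 hx hz (by linarith : (0:ℝ) ≤ 1 - t) ht0.le (by ring)
        rw [hhz z]
        simp only [smul_eq_mul, hg] at this ⊢
        linarith
      have hil : IntegrableOn (fun z => (1 - t) * g x + t * g z) Δ :=
        (integrableOn_const hcomp.measure_lt_top.ne).add (hint.const_mul t)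
      calc (1 - t) * g x * V + t * I
          = ∫ z in Δ, ((1 - t) * g x + t * g z) := by
            rw [integral_add (integrableOn_const (C := (1 - t) * g x) hcomp.measure_lt_top.ne)
              (hint.const_mul t), setIntegral_const, integral_const_mul, smul_eq_mul, measureReal_def,
              ← hV, ← hI]
            ring
        _ ≤ ∫ z in Δ, g (h z) :=
            setIntegral_mono_on hil hghint hmeas hle
    -- step 2: change of variables
    have hinj : Function.Injective h := by
      intro a b hab
      simp only [hh, add_left_inj] at hab
      exact smul_right_injective _ ht0.ne' hab
    have himg : MeasurableSet (h '' Δ) :=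
      (hcomp.image hcont).measurableSet
    have step2 : ∫ z in Δ, g (h z) = (t ^ n)⁻¹ * ∫ z in h '' Δ, g z := by
      set F : (Fin n → ℝ) → ℝ := indicator (h '' Δ) g with hF
      have e1 : ∫ z in Δ, g (h z) = ∫ z, F (h z) := by
        rw [← integral_indicator hmeas]
        congr 1
        ext z
        by_cases hz : z ∈ Δ
        · rw [indicator_of_mem hz, hF, indicator_of_mem (mem_image_of_mem h hz)]
        · rw [indicator_of_notMem hz, hF, indicator_of_notMem]
          intro hmem
          obtain ⟨w, hw, hwz⟩ := hmem
          exact hz (hinj hwz ▸ hw)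
      have e2 : ∫ z, F (h z) = (t ^ n)⁻¹ * ∫ z, F z := by
        have e2a : ∫ z, F (h z) = ∫ z, (fun w => F (w + c)) (t • z) := rfl
        have e2b : ∫ w, F (w + c) = ∫ w, F w :=
          integral_add_right_eq_self (fun w => F w) c
        rw [e2a, Measure.integral_comp_smul_of_nonneg volume (fun w => F (w + c)) t (hR := ht0.le),
          Module.finrank_fin_fun, smul_eq_mul, e2b]
      rw [e1, e2, integral_indicator himg]
    -- step 3: monotonicity of integral over subsets
    have step3 : ∫ z in h '' Δ, g z ≤ I := by
      apply setIntegral_mono_set hint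
      · exact (ae_restrict_iff' hmeas).2 (Filter.Eventually.of_forall hg0)
      · exact HasSubset.Subset.eventuallyLE (image_subset_iff.2 hmaps)
    have htn : (0:ℝ) < t ^ n := pow_pos ht0 n
    have main : (1 - t) * g x * V + t * I ≤ (t ^ n)⁻¹ * I := by
      calc (1 - t) * g x * V + t * I ≤ ∫ z in Δ, g (h z) := step1
        _ = (t ^ n)⁻¹ * ∫ z in h '' Δ, g z := step2
        _ ≤ (t ^ n)⁻¹ * I := by
            apply mul_le_mul_of_nonneg_left step3 (inv_nonneg.2 htn.le)
    have m2 : t ^ n * ((1 - t) * g x * V) + t ^ (n+1) * I ≤ I := by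
      have h2 := mul_le_mul_of_nonneg_left main htn.le
      rw [← mul_assoc, mul_inv_cancel₀ htn.ne', one_mul] at h2
      calc t ^ n * ((1 - t) * g x * V) + t ^ (n+1) * I
          = t ^ n * ((1 - t) * g x * V + t * I) := by ring
        _ ≤ I := h2
    have geom : 1 - t ^ (n+1) = (1 - t) * ∑ i ∈ Finset.range (n+1), t ^ i := by
      have hgs := geom_sum_mul t (n+1)
      nlinarith [hgs]
    have m4 : (1 - t) * (t ^ n * (g x * V)) ≤
        (1 - t) * ((∑ i ∈ Finset.range (n+1), t ^ i) * I) := by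
      have e1 : (1 - t) * (t ^ n * (g x * V)) = t ^ n * ((1 - t) * g x * V) := by ring
      have e2 : I - t ^ (n+1) * I = (1 - t) * ((∑ i ∈ Finset.range (n+1), t ^ i) * I) := by
        rw [show I - t ^ (n+1) * I = (1 - t ^ (n+1)) * I from by ring, geom, mul_assoc]
      rw [e1]
      linarith [m2, e2]
    exact le_of_mul_le_mul_left m4 (by linarith : (0:ℝ) < 1 - t)
  -- take the limit t → 1⁻
  have hlim : g x * V ≤ ((n : ℝ) + 1) * I := by
    have hne' : (𝓝[<] (1:ℝ)).NeBot := inferInstance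
    have h1 : Tendsto (fun t : ℝ => t ^ n * (g x * V)) (𝓝[<] 1) (𝓝 (g x * V)) := by
      have : Tendsto (fun t : ℝ => t ^ n * (g x * V)) (𝓝 1) (𝓝 (1 ^ n * (g x * V))) := by
        exact (continuous_pow n).continuousAt.mul tendsto_const_nhds
      simpa using this.mono_left nhdsWithin_le_nhds
    have h2 : Tendsto (fun t : ℝ => (∑ i ∈ Finset.range (n+1), t ^ i) * I) (𝓝[<] 1)
        (𝓝 (((n:ℝ) + 1) * I)) := by
      have hc : Continuous (fun t : ℝ => (∑ i ∈ Finset.range (n+1), t ^ i) * I) := by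
        exact (continuous_finset_sum _ fun i _ => continuous_pow i).mul continuous_const
      have := hc.continuousAt (x := (1:ℝ))
      have hval : (∑ i ∈ Finset.range (n+1), (1:ℝ) ^ i) * I = ((n:ℝ) + 1) * I := by
        simp [Finset.sum_const]
      rw [ContinuousAt, hval] at this
      exact this.mono_left nhdsWithin_le_nhds
    refine le_of_tendsto_of_tendsto h1 h2 ?_
    filter_upwards [Ioo_mem_nhdsLT_of_mem (by norm_num : (1:ℝ) ∈ Ioc 0 1)] with t ht
    exact key t ht
  -- conclude
  have : f x - m ≤ ((n:ℝ) + 1) / V * I := by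
    rw [div_mul_eq_mul_div, le_div_iff₀ hVpos]
    calc (f x - m) * V = g x * V := rfl
      _ ≤ ((n:ℝ) + 1) * I := hlim
  linarith
end

section
/- Let (M, μ) be a measure space, Δ ⊂ ℝ^n a convex body, and (ϑ_w)_{w∈M} a family of continuous concave functions ϑ_w : Δ → ℝ such that (a) for each vertex m of the polytope Δ the function w ↦ ϑ_w(m) is μ-integrable, and (b) the function w ↦ ∫_Δ ϑ_w(x) dx is μ-integrable. Then the function (w,x) ↦ ϑ_w(x) is integrable on M × Δ with respect to μ × vol, provided it is measurable. -/
open MeasureTheory Set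

lemma integrable_finset_inf' {M E : Type*} [MeasurableSpace M] {μ : Measure M}
    (V : Finset E) (hV : V.Nonempty) (f : M → E → ℝ)
    (h : ∀ v ∈ V, Integrable (fun w => f w v) μ) :
    Integrable (fun w => V.inf' hV (fun v => f w v)) μ := by
  induction hV using Finset.Nonempty.cons_induction with
  | singleton a => simpa using h a (by simp)
  | cons a s ha hs ih =>
      simp only [Finset.inf'_cons (H := hs)]
      exact (h a (by simp)).inf (ih fun v hv => h v (Finset.mem_cons_of_mem hv))

theorem integrable_prod_of_concave_family (n : ℕ) {M : Type*} [MeasurableSpace M]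
    (μ : Measure M) (V : Finset (Fin n → ℝ)) (hV : V.Nonempty)
    (hpos : 0 < volume (convexHull ℝ (V : Set (Fin n → ℝ))))
    (ϑ : M → (Fin n → ℝ) → ℝ)
    (hconc : ∀ w, ConcaveOn ℝ (convexHull ℝ (V : Set (Fin n → ℝ))) (ϑ w))
    (hcont : ∀ w, ContinuousOn (ϑ w) (convexHull ℝ (V : Set (Fin n → ℝ))))
    (ha : ∀ v ∈ V, Integrable (fun w => ϑ w v) μ)
    (hb : Integrable (fun w => ∫ x in convexHull ℝ (V : Set (Fin n → ℝ)), ϑ w x) μ)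
    (hmeas : AEStronglyMeasurable (fun p : M × (Fin n → ℝ) => ϑ p.1 p.2)
      (μ.prod (volume.restrict (convexHull ℝ (V : Set (Fin n → ℝ)))))) :
    Integrable (fun p : M × (Fin n → ℝ) => ϑ p.1 p.2)
      (μ.prod (volume.restrict (convexHull ℝ (V : Set (Fin n → ℝ))))) := by
  set Δ : Set (Fin n → ℝ) := convexHull ℝ (V : Set (Fin n → ℝ)) with hΔdef
  have hcomp : IsCompact Δ := V.finite_toSet.isCompact_convexHull (𝕜 := ℝ)
  have hvolΔ : volume Δ < ⊤ := hcomp.measure_lt_top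
  have hint : ∀ w, IntegrableOn (ϑ w) Δ volume := fun w =>
    (hcont w).integrableOn_compact hcomp
  set m : M → ℝ := fun w => V.inf' hV (fun v => ϑ w v) with hmdef
  have hm : Integrable m μ := integrable_finset_inf' V hV ϑ ha
  have hmx : ∀ w, ∀ x ∈ Δ, m w ≤ ϑ w x := fun w x hx =>
    ConvexOn.inf_le_of_mem_convexHull (hconc w) (subset_convexHull ℝ _) hx
  rw [MeasureTheory.integrable_prod_iff hmeas]
  refine ⟨ae_of_all _ fun w => hint w, ?_⟩
  refine Integrable.mono'
    (g := fun w => |∫ x in Δ, ϑ w x| + 2 * (volume Δ).toReal * |m w|)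
    (hb.abs.add ((hm.abs).const_mul _)) ?_ (ae_of_all _ fun w => ?_)
  · exact hmeas.norm.integral_prod_right'
  · have h1 : ∀ x ∈ Δ, ‖ϑ w x‖ ≤ ϑ w x + 2 * max 0 (-(m w)) := by
      intro x hx
      have h2 := hmx w x hx
      have h3 : 0 ≤ max 0 (-(m w)) := le_max_left _ _
      have h4 : -(m w) ≤ max 0 (-(m w)) := le_max_right _ _
      rw [Real.norm_eq_abs]
      rcases abs_cases (ϑ w x) with ⟨he, _⟩ | ⟨he, _⟩ <;> rw [he] <;> linarith
    have hintc : IntegrableOn (fun x => ϑ w x + 2 * max 0 (-(m w))) Δ volume :=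
      (hint w).add (integrableOn_const hvolΔ.ne)
    have h5 : (∫ x in Δ, ‖ϑ w x‖) ≤ ∫ x in Δ, (ϑ w x + 2 * max 0 (-(m w))) :=
      setIntegral_mono_on (hint w).norm hintc hcomp.measurableSet h1
    have h6 : (∫ x in Δ, (ϑ w x + 2 * max 0 (-(m w))))
        = (∫ x in Δ, ϑ w x) + (volume Δ).toReal * (2 * max 0 (-(m w))) := by
      rw [integral_add (hint w) (integrableOn_const hvolΔ.ne),
        setIntegral_const, smul_eq_mul, Measure.real]
    have h7 : ‖∫ x in Δ, ‖ϑ w x‖‖ = ∫ x in Δ, ‖ϑ w x‖ :=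
      Real.norm_of_nonneg (integral_nonneg fun x => norm_nonneg _)
    have h8 : max 0 (-(m w)) ≤ |m w| := by
      rcases le_total (m w) 0 with h | h
      · simp [abs_of_nonpos h, h]
      · simp [abs_of_nonneg h, h]
    have h9 : (∫ x in Δ, ϑ w x) ≤ |∫ x in Δ, ϑ w x| := le_abs_self _
    have hvr : (0:ℝ) ≤ (volume Δ).toReal := ENNReal.toReal_nonneg
    rw [h7]
    calc (∫ x in Δ, ‖ϑ w x‖)
        ≤ (∫ x in Δ, ϑ w x) + (volume Δ).toReal * (2 * max 0 (-(m w))) := by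
          rw [← h6]; exact h5
      _ ≤ |∫ x in Δ, ϑ w x| + 2 * (volume Δ).toReal * |m w| := by
          have : (volume Δ).toReal * (2 * max 0 (-(m w)))
              ≤ (volume Δ).toReal * (2 * |m w|) := by
            apply mul_le_mul_of_nonneg_left (by linarith) hvr
          nlinarith
end
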